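/- Let q = p^m be a prime power and F(X) = X^r (X^{α(q−1)} + X^{β(q−1)} + 1) ∈ F_{q^2}[X], where α, β, r are positive integers. If gcd(α, β, r, q+1) ≠ 1, then F is not a permutation polynomial of F_{q^2}. -/
import Mathlib


/-- If `gcd(α, β, r, q+1) ≠ 1` then `F(X) = X^r (X^{α(q-1)} + X^{β(q-1)} + 1)`
is not a permutation polynomial of `F_{q^2}`. -/
theorem stmt_5 (q α β r : ℕ)
    (p m : ℕ) (hp : p.Prime) (hm : 0 < m) (hqpm : q = p ^ m)
    (hα : 0 < α) (hβ : 0 < β) (hr : 0 < r)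
    (hgcd : Nat.gcd (Nat.gcd α β) (Nat.gcd r (q + 1)) ≠ 1)
    (F : Type*) [Field F] [Fintype F] (hF : Fintype.card F = q ^ 2) :
    ¬ Function.Bijective
        (fun x : F => x ^ r * (x ^ (α * (q - 1)) + x ^ (β * (q - 1)) + 1)) := by
  set d := Nat.gcd (Nat.gcd α β) (Nat.gcd r (q + 1)) with hd
  have hdα : d ∣ α := (Nat.gcd_dvd_left _ _).trans (Nat.gcd_dvd_left α β)
  have hdβ : d ∣ β := (Nat.gcd_dvd_left _ _).trans (Nat.gcd_dvd_right α β)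
  have hdr : d ∣ r := (Nat.gcd_dvd_right _ _).trans (Nat.gcd_dvd_left r (q + 1))
  have hdq : d ∣ q + 1 := (Nat.gcd_dvd_right _ _).trans (Nat.gcd_dvd_right r (q + 1))
  have hq2 : 2 ≤ q := by
    have := Nat.one_lt_pow hm.ne' hp.one_lt
    omega
  have hdpos : 0 < d := Nat.pos_of_ne_zero (by
    intro h; rw [h] at hdq; simp at hdq)
  have hd2 : 2 ≤ d := by omega
  -- card of units
  have hcard : Nat.card Fˣ = q ^ 2 - 1 := by
    rw [Nat.card_units, Nat.card_eq_fintype_card, hF]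
  have hdvd_card : d ∣ Nat.card Fˣ := by
    rw [hcard]
    refine hdq.trans ⟨q - 1, ?_⟩
    rcases Nat.exists_eq_add_of_le hq2 with ⟨k, rfl⟩
    have h : (2 + k) ^ 2 = (2 + k + 1) * (2 + k - 1) + 1 := by
      have h1 : 2 + k - 1 = k + 1 := by omega
      rw [h1]; ring
    omega
  set n := Nat.card Fˣ with hn
  have hnpos : 0 < n := Nat.card_pos
  obtain ⟨g, hg⟩ := IsCyclic.exists_generator (α := Fˣ)
  have horder : orderOf g = n := orderOf_eq_card_of_forall_mem_zpowers hg
  set ζ : Fˣ := g ^ (n / d) with hζ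
  have hζd : ζ ^ d = 1 := by
    rw [hζ, ← pow_mul, Nat.div_mul_cancel hdvd_card, ← horder, pow_orderOf_eq_one]
  have hζne : ζ ≠ 1 := by
    intro h
    rw [hζ, pow_eq_one_iff_modEq, horder] at h
    have h1 : n ∣ n / d := (Nat.modEq_zero_iff_dvd).mp h
    have h2 : 0 < n / d := Nat.div_pos (Nat.le_of_dvd hnpos hdvd_card) hdpos
    have h3 : n / d < n := Nat.div_lt_self hnpos hd2
    exact absurd (Nat.le_of_dvd h2 h1) (by omega)
  have pow_one_of_dvd : ∀ k : ℕ, d ∣ k → ζ ^ k = 1 := by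
    rintro k ⟨c, rfl⟩
    rw [pow_mul, hζd, one_pow]
  -- coercions to F
  have hζr : (ζ : F) ^ r = 1 := by
    rw [← Units.val_pow_eq_pow_val, pow_one_of_dvd r hdr, Units.val_one]
  have hζα : (ζ : F) ^ (α * (q - 1)) = 1 := by
    rw [← Units.val_pow_eq_pow_val, pow_one_of_dvd _ (hdα.mul_right _), Units.val_one]
  have hζβ : (ζ : F) ^ (β * (q - 1)) = 1 := by
    rw [← Units.val_pow_eq_pow_val, pow_one_of_dvd _ (hdβ.mul_right _), Units.val_one]
  intro hbij
  have : (ζ : F) = 1 := hbij.injective (by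
    simp [hζr, hζα, hζβ])
  exact hζne (Units.ext this)
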